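/- A nonempty collection B of k-element subsets of [n] is the set of bases of a matroid if and only if every edge (1-dimensional face) of the polytope conv{e_B : B ∈ B} ⊂ ℝⁿ is a parallel translate of e_i − e_j for some i, j ∈ [n]. -/

import Mathlib

open scoped BigOperators
open scoped Pointwise

/-- The indicator (characteristic) vector `e_B ∈ ℝⁿ` of a subset `B ⊆ [n]`. -/
noncomputable def ind (n : ℕ) (B : Finset (Fin n)) : Fin n → ℝ :=
  fun i => if i ∈ B then 1 else 0

/-- The polytope `Γ_𝓑 = conv{e_B : B ∈ 𝓑} ⊆ ℝⁿ`. -/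
noncomputable def polytopeOf (n : ℕ) (𝓑 : Finset (Finset (Fin n))) : Set (Fin n → ℝ) :=
  convexHull ℝ (ind n '' ↑𝓑)

/-- `F` is a face of `P`: the set of maximizers in `P` of some linear functional. -/
def IsFaceOf (n : ℕ) (P F : Set (Fin n → ℝ)) : Prop :=
  ∃ w : Fin n → ℝ, F = {x ∈ P | ∀ y ∈ P, ∑ i, w i * y i ≤ ∑ i, w i * x i}

/-- The basis exchange axiom for a collection of subsets of `[n]`. -/
def ExchangeAxiom (n : ℕ) (𝓑 : Finset (Finset (Fin n))) : Prop :=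
  ∀ B₁ ∈ 𝓑, ∀ B₂ ∈ 𝓑, ∀ x ∈ B₁ \ B₂, ∃ y ∈ B₂ \ B₁, insert y (B₁.erase x) ∈ 𝓑

/- ### Auxiliary material -/

/-- The dot-product linear functional. -/
noncomputable def dotL (n : ℕ) (w : Fin n → ℝ) : (Fin n → ℝ) →ₗ[ℝ] ℝ where
  toFun x := ∑ i, w i * x i
  map_add' x y := by simp [mul_add, Finset.sum_add_distrib]
  map_smul' c x := by
    simp only [Pi.smul_apply, smul_eq_mul, RingHom.id_apply, Finset.mul_sum]
    exact Finset.sum_congr rfl fun i _ => by ring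

lemma dotL_apply {n : ℕ} (w x : Fin n → ℝ) : dotL n w x = ∑ i, w i * x i := rfl

lemma dotL_ind {n : ℕ} (w : Fin n → ℝ) (B : Finset (Fin n)) :
    dotL n w (ind n B) = ∑ i ∈ B, w i := by
  classical
  simp only [dotL_apply, ind, mul_ite, mul_one, mul_zero]
  rw [Finset.sum_ite_mem, Finset.univ_inter]

lemma ind_inj {n : ℕ} {A B : Finset (Fin n)} (h : ind n A = ind n B) : A = B := by
  classical
  ext i
  have := congrFun h i
  simp only [ind] at this
  by_cases hA : i ∈ A <;> by_cases hB : i ∈ B <;> simp [hA, hB] at this ⊢ <;> norm_num at this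

lemma ind_mem_zero_one {n : ℕ} (B : Finset (Fin n)) (i : Fin n) :
    ind n B i = 0 ∨ ind n B i = 1 := by
  unfold ind; split <;> simp

/-- Values of the linear functional on the polytope are bounded by the max over vertices. -/
lemma dotL_le_of_forall_vertex {n : ℕ} {𝓑 : Finset (Finset (Fin n))} {w : Fin n → ℝ} {μ : ℝ}
    (hub : ∀ C ∈ 𝓑, dotL n w (ind n C) ≤ μ) :
    ∀ x ∈ polytopeOf n 𝓑, dotL n w x ≤ μ := by
  intro x hx
  have : polytopeOf n 𝓑 ⊆ {x | dotL n w x ≤ μ} := by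
    apply convexHull_min
    · rintro _ ⟨C, hC, rfl⟩
      exact hub C hC
    · exact convex_halfSpace_le (dotL n w).isLinear μ
  exact this hx

/-- A face of the polytope is the convex hull of the vertex maximizers. -/
lemma face_eq {n : ℕ} (𝓑 𝓜 : Finset (Finset (Fin n))) (w : Fin n → ℝ) (μ : ℝ)
    (h𝓜 : 𝓜 ⊆ 𝓑) (hne : 𝓜.Nonempty)
    (hub : ∀ C ∈ 𝓑, dotL n w (ind n C) ≤ μ)
    (hmem : ∀ C ∈ 𝓑, (dotL n w (ind n C) = μ ↔ C ∈ 𝓜)) :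
    {x ∈ polytopeOf n 𝓑 | ∀ y ∈ polytopeOf n 𝓑, ∑ i, w i * y i ≤ ∑ i, w i * x i}
      = convexHull ℝ (ind n '' ↑𝓜) := by
  classical
  obtain ⟨A₀, hA₀⟩ := hne
  have hA₀B : A₀ ∈ 𝓑 := h𝓜 hA₀
  have hA₀μ : dotL n w (ind n A₀) = μ := (hmem A₀ hA₀B).2 hA₀
  apply Set.Subset.antisymm
  · rintro x ⟨hxP, hxmax⟩
    have hxμ : dotL n w x = μ := by
      have h1 : dotL n w x ≤ μ := dotL_le_of_forall_vertex hub x hxP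
      have h2 : dotL n w (ind n A₀) ≤ dotL n w x :=
        hxmax (ind n A₀) (subset_convexHull ℝ _ ⟨A₀, hA₀B, rfl⟩)
      rw [hA₀μ] at h2
      linarith
    rw [polytopeOf, mem_convexHull_iff_exists_fintype] at hxP
    obtain ⟨ι, hι, wt, z, hw0, hw1, hz, hxz⟩ := hxP
    have hzB : ∀ i, dotL n w (z i) ≤ μ := fun i => by
      obtain ⟨C, hC, hCz⟩ := hz i
      rw [← hCz]; exact hub C hC
    have hsum0 : ∑ i, wt i * (μ - dotL n w (z i)) = 0 := by
      have hdx : dotL n w x = ∑ i, wt i * dotL n w (z i) := by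
        rw [← hxz, map_sum]; simp [smul_eq_mul]
      have hμμ : ∑ i, wt i * μ = μ := by rw [← Finset.sum_mul, hw1, one_mul]
      calc ∑ i, wt i * (μ - dotL n w (z i))
          = ∑ i, (wt i * μ - wt i * dotL n w (z i)) := by
            exact Finset.sum_congr rfl fun i _ => by ring
        _ = μ - dotL n w x := by rw [Finset.sum_sub_distrib, hμμ, hdx]
        _ = 0 := by rw [hxμ]; ring
    have hzero : ∀ i, wt i ≠ 0 → dotL n w (z i) = μ := by
      intro i hi
      have h := (Finset.sum_eq_zero_iff_of_nonneg
        (fun i _ => mul_nonneg (hw0 i) (by linarith [hzB i]))).1 hsum0 i (Finset.mem_univ i)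
      rcases mul_eq_zero.1 h with h' | h'
      · exact absurd h' hi
      · linarith
    set z' : ι → (Fin n → ℝ) := fun i => if wt i = 0 then ind n A₀ else z i with hz'
    have hxz' : ∑ i, wt i • z' i = x := by
      rw [← hxz]
      apply Finset.sum_congr rfl
      intro i _
      by_cases h : wt i = 0 <;> simp [z', h]
    apply mem_convexHull_of_exists_fintype wt z' hw0 hw1 _ hxz'
    intro i
    by_cases h : wt i = 0
    · simp only [z', h, if_true, if_pos]
      exact ⟨A₀, hA₀, rfl⟩
    · simp only [z', h, if_neg, if_false]
      obtain ⟨C, hC, hCz⟩ := hz i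
      have hCμ : dotL n w (ind n C) = μ := by rw [hCz]; exact hzero i h
      exact ⟨C, (hmem C hC).1 hCμ, hCz⟩
  · intro y hy
    have hyP : y ∈ polytopeOf n 𝓑 := convexHull_mono (Set.image_mono h𝓜) hy
    have hyμ : dotL n w y = μ := by
      have hs : convexHull ℝ (ind n '' ↑𝓜) ⊆ {x | dotL n w x = μ} := by
        apply convexHull_min
        · rintro _ ⟨C, hC, rfl⟩
          exact (hmem C (h𝓜 hC)).2 hC
        · exact convex_hyperplane (dotL n w).isLinear μ
      exact hs hy
    refine ⟨hyP, fun zz hzz => ?_⟩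
    have hle := dotL_le_of_forall_vertex hub zz hzz
    show dotL n w zz ≤ dotL n w y
    rw [hyμ]
    exact hle

/-- 0/1 vectors on a line through two distinct 0/1 vectors coincide with an endpoint. -/
lemma zero_one_line {n : ℕ} {A B C : Finset (Fin n)} (hAB : A ≠ B) (t : ℝ)
    (h : ind n C = ind n A + t • (ind n B - ind n A)) : C = A ∨ C = B := by
  classical
  have ht : t = 0 ∨ t = 1 := by
    have hex : ∃ i, (i ∈ A ∧ i ∉ B) ∨ (i ∈ B ∧ i ∉ A) := by
      by_contra hno
      push_neg at hno
      apply hAB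
      ext i
      have := hno i
      tauto
    obtain ⟨i, hi⟩ := hex
    have hC := congrFun h i
    simp only [Pi.add_apply, Pi.smul_apply, Pi.sub_apply, smul_eq_mul, ind] at hC
    rcases hi with ⟨h1, h2⟩ | ⟨h1, h2⟩
    · rw [if_pos h1, if_neg h2] at hC
      rcases ind_mem_zero_one C i with hc | hc <;>
        simp only [ind] at hc <;> rw [hc] at hC <;> [right; left] <;> linarith
    · rw [if_pos h1, if_neg h2] at hC
      rcases ind_mem_zero_one C i with hc | hc <;>
        simp only [ind] at hc <;> rw [hc] at hC <;> [left; right] <;> linarith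
  rcases ht with rfl | rfl
  · left
    apply ind_inj
    rw [h]; ext i; simp
  · right
    apply ind_inj
    rw [h]; ext i; simp

lemma exchange_sum {n : ℕ} (w : Fin n → ℝ) {A : Finset (Fin n)} {a b : Fin n}
    (ha : a ∈ A) (hb : b ∉ A) :
    dotL n w (ind n (insert b (A.erase a))) = dotL n w (ind n A) - w a + w b := by
  classical
  rw [dotL_ind, dotL_ind, Finset.sum_insert (fun h => hb (Finset.mem_of_mem_erase h)),
    Finset.sum_erase_eq_sub ha]
  ring

lemma sdiff_nonempty_of_ne {n : ℕ} {A B : Finset (Fin n)} (hcard : A.card = B.card)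
    (hAB : A ≠ B) : (A \ B).Nonempty := by
  rw [Finset.sdiff_nonempty]
  intro hsub
  exact hAB (Finset.eq_of_subset_of_card_le hsub (le_of_eq hcard.symm))

/-- Combinatorial core of the forward direction. -/
lemma forward_core {n k : ℕ} {𝓑 : Finset (Finset (Fin n))} (hex : ExchangeAxiom n 𝓑)
    (hk : ∀ B ∈ 𝓑, B.card = k) {A B : Finset (Fin n)} (hA : A ∈ 𝓑) (hB : B ∈ 𝓑)
    (hAB : A ≠ B) {w : Fin n → ℝ}
    (hub : ∀ C ∈ 𝓑, dotL n w (ind n C) ≤ dotL n w (ind n A))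
    (hBeq : dotL n w (ind n B) = dotL n w (ind n A))
    (honly : ∀ C ∈ 𝓑, dotL n w (ind n C) = dotL n w (ind n A) → C = A ∨ C = B) :
    ∃ i j : Fin n, A \ B = {i} ∧ B \ A = {j} := by
  classical
  have hcardAB : A.card = B.card := by rw [hk A hA, hk B hB]
  -- For each a ∈ A \ B, either we get the conclusion directly, or a strictly smaller weight
  have hstep : ∀ a ∈ A \ B, (∃ i j : Fin n, A \ B = {i} ∧ B \ A = {j}) ∨
      ∃ b ∈ B \ A, w b < w a := by
    intro a ha
    obtain ⟨haA, haB⟩ := Finset.mem_sdiff.1 ha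
    obtain ⟨b, hb, hCb⟩ := hex A hA B hB a ha
    obtain ⟨hbB, hbA⟩ := Finset.mem_sdiff.1 hb
    have hsum := exchange_sum w haA hbA
    have hle : dotL n w (ind n (insert b (A.erase a))) ≤ dotL n w (ind n A) := hub _ hCb
    rcases lt_or_eq_of_le hle with hlt | heq
    · right; exact ⟨b, hb, by linarith [hsum ▸ hlt]⟩
    · -- equality: the new basis is A or B
      rcases honly _ hCb heq with hCA | hCB
      · exfalso
        have : b ∈ A := hCA ▸ Finset.mem_insert_self b (A.erase a)
        exact hbA this
      · left
        refine ⟨a, b, ?_, ?_⟩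
        · ext p
          simp only [Finset.mem_sdiff, Finset.mem_singleton]
          constructor
          · rintro ⟨hpA, hpB⟩
            by_contra hpa
            apply hpB
            rw [← hCB]
            exact Finset.mem_insert_of_mem (Finset.mem_erase.2 ⟨hpa, hpA⟩)
          · rintro rfl
            exact ⟨haA, haB⟩
        · ext p
          simp only [Finset.mem_sdiff, Finset.mem_singleton]
          constructor
          · rintro ⟨hpB, hpA⟩
            rw [← hCB] at hpB
            rcases Finset.mem_insert.1 hpB with rfl | hpe
            · rfl
            · exact absurd (Finset.mem_of_mem_erase hpe) hpA
          · rintro rfl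
            exact ⟨hbB, hbA⟩
  -- symmetric version with A and B swapped
  have hstep' : ∀ b ∈ B \ A, (∃ i j : Fin n, A \ B = {i} ∧ B \ A = {j}) ∨
      ∃ a ∈ A \ B, w a < w b := by
    intro b hb
    obtain ⟨hbB, hbA⟩ := Finset.mem_sdiff.1 hb
    obtain ⟨a, ha, hCa⟩ := hex B hB A hA b hb
    obtain ⟨haA, haB⟩ := Finset.mem_sdiff.1 ha
    have hsum := exchange_sum w hbB haB
    have hle : dotL n w (ind n (insert a (B.erase b))) ≤ dotL n w (ind n A) := hub _ hCa
    rw [hBeq] at hsum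
    rcases lt_or_eq_of_le hle with hlt | heq
    · right; exact ⟨a, ha, by linarith [hsum ▸ hlt]⟩
    · rcases honly _ hCa heq with hCA | hCB
      · left
        refine ⟨a, b, ?_, ?_⟩
        · ext p
          simp only [Finset.mem_sdiff, Finset.mem_singleton]
          constructor
          · rintro ⟨hpA, hpB⟩
            rw [← hCA] at hpA
            rcases Finset.mem_insert.1 hpA with rfl | hpe
            · rfl
            · exact absurd (Finset.mem_of_mem_erase hpe) hpB
          · rintro rfl
            exact ⟨haA, haB⟩
        · ext p
          simp only [Finset.mem_sdiff, Finset.mem_singleton]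
          constructor
          · rintro ⟨hpB, hpA⟩
            by_contra hpb
            apply hpA
            rw [← hCA]
            exact Finset.mem_insert_of_mem (Finset.mem_erase.2 ⟨hpb, hpB⟩)
          · rintro rfl
            exact ⟨hbB, hbA⟩
      · exfalso
        have : a ∈ B := hCB ▸ Finset.mem_insert_self a (B.erase b)
        exact haB this
  -- minimum argument
  by_contra hcon
  have hABne : (A \ B).Nonempty := sdiff_nonempty_of_ne hcardAB hAB
  obtain ⟨a₀, ha₀, hmin⟩ := Finset.exists_min_image (A \ B) w hABne
  rcases hstep a₀ ha₀ with hdone | ⟨b, hb, hwb⟩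
  · exact hcon hdone
  rcases hstep' b hb with hdone | ⟨a, ha, hwa⟩
  · exact hcon hdone
  exact absurd (hmin a ha) (by linarith)

lemma ind_sdiff_single {n : ℕ} {A B : Finset (Fin n)} {i j : Fin n}
    (hi : A \ B = {i}) (hj : B \ A = {j}) :
    ind n A - ind n B = Pi.single i 1 - Pi.single j 1 := by
  classical
  have hiA : i ∈ A ∧ i ∉ B := by
    have : i ∈ A \ B := hi ▸ Finset.mem_singleton_self i
    exact Finset.mem_sdiff.1 this
  have hjB : j ∈ B ∧ j ∉ A := by
    have : j ∈ B \ A := hj ▸ Finset.mem_singleton_self j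
    exact Finset.mem_sdiff.1 this
  funext p
  have hpi : p ∈ A ∧ p ∉ B ↔ p = i := by
    rw [← Finset.mem_sdiff, hi, Finset.mem_singleton]
  have hpj : p ∈ B ∧ p ∉ A ↔ p = j := by
    rw [← Finset.mem_sdiff, hj, Finset.mem_singleton]
  simp only [Pi.sub_apply, ind, Pi.single_apply]
  by_cases hpA : p ∈ A <;> by_cases hpB : p ∈ B
  · rw [if_pos hpA, if_pos hpB, if_neg (by rintro rfl; exact hiA.2 hpB),
      if_neg (by rintro rfl; exact hjB.2 hpA)]
    ring
  · rw [if_pos hpA, if_neg hpB, if_pos (hpi.1 ⟨hpA, hpB⟩),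
      if_neg (by rintro rfl; exact hpB hjB.1)]
  · rw [if_neg hpA, if_pos hpB, if_neg (by rintro rfl; exact hpA hiA.1),
      if_pos (hpj.1 ⟨hpB, hpA⟩)]
  · rw [if_neg hpA, if_neg hpB, if_neg (by rintro rfl; exact hpA hiA.1),
      if_neg (by rintro rfl; exact hpB hjB.1)]

/-- The auxiliary weight vector selecting sets between `A ∩ B` and `A ∪ B`. -/
noncomputable def wtwo (n : ℕ) (A B : Finset (Fin n)) : Fin n → ℝ :=
  fun i => if i ∈ A ∩ B then 1 else if i ∈ A ∪ B then 0 else -1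

lemma wtwo_sum {n : ℕ} (A B C : Finset (Fin n)) :
    dotL n (wtwo n A B) (ind n C)
      = ((C ∩ (A ∩ B)).card : ℝ) - ((C \ (A ∪ B)).card : ℝ) := by
  classical
  rw [dotL_ind]
  rw [← Finset.sum_inter_add_sum_sdiff C (A ∩ B) (wtwo n A B)]
  have h1 : ∑ i ∈ C ∩ (A ∩ B), wtwo n A B i = ((C ∩ (A ∩ B)).card : ℝ) := by
    rw [Finset.sum_congr rfl
      (fun i hi => show wtwo n A B i = 1 from if_pos (Finset.mem_of_mem_inter_right hi))]
    rw [Finset.sum_const, nsmul_eq_mul, mul_one]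
  have h2 : ∑ i ∈ C \ (A ∩ B), wtwo n A B i = -(((C \ (A ∪ B)).card : ℝ)) := by
    rw [← Finset.sum_inter_add_sum_sdiff (C \ (A ∩ B)) (A ∪ B) (wtwo n A B)]
    have h3 : ∑ i ∈ (C \ (A ∩ B)) ∩ (A ∪ B), wtwo n A B i = 0 := by
      apply Finset.sum_eq_zero
      intro i hi
      obtain ⟨hi1, hi2⟩ := Finset.mem_inter.1 hi
      have hni : i ∉ A ∩ B := (Finset.mem_sdiff.1 hi1).2
      unfold wtwo
      rw [if_neg hni, if_pos hi2]
    have h4 : (C \ (A ∩ B)) \ (A ∪ B) = C \ (A ∪ B) := by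
      ext p
      simp only [Finset.mem_sdiff, Finset.mem_inter, Finset.mem_union]
      tauto
    have h5 : ∑ i ∈ (C \ (A ∩ B)) \ (A ∪ B), wtwo n A B i
        = -(((C \ (A ∪ B)).card : ℝ)) := by
      rw [h4]
      have heach : ∀ i ∈ C \ (A ∪ B), wtwo n A B i = -1 := by
        intro i hi
        have hi' := (Finset.mem_sdiff.1 hi).2
        unfold wtwo
        rw [if_neg (fun h => hi' (Finset.mem_union_left _ (Finset.mem_inter.1 h).1)), if_neg hi']
      rw [Finset.sum_congr rfl heach, Finset.sum_const, nsmul_eq_mul, mul_neg_one]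
    rw [h3, h5, zero_add]
  rw [h1, h2]
  ring

lemma wtwo_int {n : ℕ} {A B C : Finset (Fin n)} (h1 : A ∩ B ⊆ C) (h2 : C ⊆ A ∪ B) :
    dotL n (wtwo n A B) (ind n C) = ((A ∩ B).card : ℝ) := by
  classical
  rw [wtwo_sum, Finset.inter_eq_right.2 h1, Finset.sdiff_eq_empty_iff_subset.2 h2,
    Finset.card_empty]
  simp

lemma wtwo_non {n : ℕ} {A B C : Finset (Fin n)} (h : ¬(A ∩ B ⊆ C ∧ C ⊆ A ∪ B)) :
    dotL n (wtwo n A B) (ind n C) ≤ ((A ∩ B).card : ℝ) - 1 := by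
  classical
  rw [wtwo_sum]
  by_cases h1 : A ∩ B ⊆ C
  · have h2 : ¬(C ⊆ A ∪ B) := fun hh => h ⟨h1, hh⟩
    have h3 : 1 ≤ (C \ (A ∪ B)).card := Finset.card_pos.2 (Finset.sdiff_nonempty.2 h2)
    have h4 : (C ∩ (A ∩ B)).card ≤ (A ∩ B).card := Finset.card_le_card Finset.inter_subset_right
    have c4 : ((C ∩ (A ∩ B)).card : ℝ) ≤ ((A ∩ B).card : ℝ) := Nat.cast_le.2 h4
    have c3 : (1 : ℝ) ≤ ((C \ (A ∪ B)).card : ℝ) := by exact_mod_cast h3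
    linarith
  · have hss : C ∩ (A ∩ B) ⊂ A ∩ B := by
      refine Finset.ssubset_iff_subset_ne.2 ⟨Finset.inter_subset_right, ?_⟩
      intro heq
      exact h1 (Finset.inter_eq_right.1 heq)
    have h4 : (C ∩ (A ∩ B)).card + 1 ≤ (A ∩ B).card := Finset.card_lt_card hss
    have c4 : ((C ∩ (A ∩ B)).card : ℝ) + 1 ≤ ((A ∩ B).card : ℝ) := by exact_mod_cast h4
    have c2 : (0 : ℝ) ≤ ((C \ (A ∪ B)).card : ℝ) := Nat.cast_nonneg _
    linarith

lemma dotL_of_clm {n : ℕ} (f : (Fin n → ℝ) →L[ℝ] ℝ) (y : Fin n → ℝ) :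
    dotL n (fun i => f (Pi.single i 1)) y = f y := by
  classical
  calc dotL n (fun i => f (Pi.single i 1)) y = ∑ i, y i • f (Pi.single i 1) := by
        rw [dotL_apply]
        exact Finset.sum_congr rfl fun i _ => by rw [smul_eq_mul]; ring
    _ = ∑ i, f (y i • (Pi.single i 1 : Fin n → ℝ)) :=
        Finset.sum_congr rfl fun i _ => (map_smul f (y i) _).symm
    _ = f (∑ i, y i • (Pi.single i 1 : Fin n → ℝ)) := (map_sum f _ _).symm
    _ = f y := by
        congr 1
        funext j
        simp only [Finset.sum_apply, Pi.smul_apply, Pi.single_apply, smul_eq_mul, mul_ite,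
          mul_one, mul_zero]
        rw [Finset.sum_ite_eq Finset.univ j y, if_pos (Finset.mem_univ j)]

set_option maxHeartbeats 1000000 in
set_option synthInstance.maxHeartbeats 400000 in
theorem ggms_matroid_polytope (n k : ℕ) (𝓑 : Finset (Finset (Fin n)))
    (h0 : 𝓑.Nonempty) (hk : ∀ B ∈ 𝓑, B.card = k) :
    ExchangeAxiom n 𝓑 ↔
      ∀ F : Set (Fin n → ℝ), IsFaceOf n (polytopeOf n 𝓑) F →
        Module.finrank ℝ (affineSpan ℝ F).direction = 1 →
        ∃ i j : Fin n, (affineSpan ℝ F).direction =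
          Submodule.span ℝ {(Pi.single i 1 - Pi.single j 1 : Fin n → ℝ)} := by
  classical
  constructor
  · -- Forward direction
    intro hex F hF hrank
    obtain ⟨w, rfl⟩ := hF
    set μ := 𝓑.sup' h0 (fun C => dotL n w (ind n C)) with hμdef
    set 𝓜 := 𝓑.filter (fun C => dotL n w (ind n C) = μ) with h𝓜def
    have h𝓜sub : 𝓜 ⊆ 𝓑 := Finset.filter_subset _ _
    have hub : ∀ C ∈ 𝓑, dotL n w (ind n C) ≤ μ :=
      fun C hC => Finset.le_sup' (fun C => dotL n w (ind n C)) hC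
    have hmem : ∀ C ∈ 𝓑, (dotL n w (ind n C) = μ ↔ C ∈ 𝓜) := fun C hC =>
      ⟨fun h => Finset.mem_filter.2 ⟨hC, h⟩, fun h => (Finset.mem_filter.1 h).2⟩
    have hne : 𝓜.Nonempty := by
      obtain ⟨C₀, hC₀, hC₀eq⟩ := Finset.exists_mem_eq_sup' h0 (fun C => dotL n w (ind n C))
      exact ⟨C₀, Finset.mem_filter.2 ⟨hC₀, hC₀eq.symm⟩⟩
    have hFeq := face_eq 𝓑 𝓜 w μ h𝓜sub hne hub hmem
    rw [hFeq] at hrank ⊢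
    rw [affineSpan_convexHull, direction_affineSpan] at hrank ⊢
    obtain ⟨A₀, hA₀⟩ := hne
    have hA₀val : dotL n w (ind n A₀) = μ := (Finset.mem_filter.1 hA₀).2
    by_cases huniq : ∀ C ∈ 𝓜, C = A₀
    · exfalso
      have himg : (ind n '' ↑𝓜) = {ind n A₀} := by
        apply Set.Subset.antisymm
        · rintro _ ⟨C, hC, rfl⟩
          rw [huniq C hC]
          rfl
        · intro y hy
          rw [Set.mem_singleton_iff.1 hy]
          exact ⟨A₀, hA₀, rfl⟩
      rw [himg] at hrank
      rw [vectorSpan_singleton] at hrank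
      simp at hrank
    push_neg at huniq
    obtain ⟨B₁, hB₁, hB₁ne⟩ := huniq
    have hB₁val : dotL n w (ind n B₁) = μ := (Finset.mem_filter.1 hB₁).2
    have hAB : A₀ ≠ B₁ := fun h => hB₁ne h.symm
    have hvne : ind n B₁ - ind n A₀ ≠ 0 := sub_ne_zero.2 (fun h => hB₁ne (ind_inj h))
    have hvmem : ind n B₁ - ind n A₀ ∈ vectorSpan ℝ (ind n '' ↑𝓜) := by
      have h := vsub_mem_vectorSpan ℝ (Set.mem_image_of_mem (ind n) (Finset.mem_coe.2 hB₁))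
        (Set.mem_image_of_mem (ind n) (Finset.mem_coe.2 hA₀))
      simpa using h
    have hspan : Submodule.span ℝ {ind n B₁ - ind n A₀} = vectorSpan ℝ (ind n '' ↑𝓜) := by
      apply Submodule.eq_of_le_of_finrank_le
      · rw [Submodule.span_le, Set.singleton_subset_iff]
        exact hvmem
      · rw [hrank, finrank_span_singleton hvne]
    have honly : ∀ C ∈ 𝓑, dotL n w (ind n C) = dotL n w (ind n A₀) → C = A₀ ∨ C = B₁ := by
      intro C hC hCval
      have hC𝓜 : C ∈ 𝓜 := (hmem C hC).1 (by rw [hCval, hA₀val])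
      have hCv : ind n C - ind n A₀ ∈ Submodule.span ℝ {ind n B₁ - ind n A₀} := by
        rw [hspan]
        have h := vsub_mem_vectorSpan ℝ (Set.mem_image_of_mem (ind n) (Finset.mem_coe.2 hC𝓜))
          (Set.mem_image_of_mem (ind n) (Finset.mem_coe.2 hA₀))
        simpa using h
      obtain ⟨t, ht⟩ := Submodule.mem_span_singleton.1 hCv
      refine zero_one_line hAB t ?_
      rw [ht]
      abel
    have hub' : ∀ C ∈ 𝓑, dotL n w (ind n C) ≤ dotL n w (ind n A₀) := by
      rw [hA₀val]
      exact hub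
    have hBeq' : dotL n w (ind n B₁) = dotL n w (ind n A₀) := by rw [hA₀val, hB₁val]
    obtain ⟨i, j, hij, hji⟩ :=
      forward_core hex hk (h𝓜sub hA₀) (h𝓜sub hB₁) hAB hub' hBeq' honly
    refine ⟨j, i, ?_⟩
    have hvv : ind n B₁ - ind n A₀ = Pi.single j 1 - Pi.single i 1 := by
      have h := ind_sdiff_single hij hji
      funext p
      have hp := congrFun h p
      simp only [Pi.sub_apply] at hp ⊢
      linarith
    rw [← hspan, hvv]
  · -- Backward direction
    intro hedge
    suffices key : ∀ d (A B : Finset (Fin n)), A ∈ 𝓑 → B ∈ 𝓑 → ∀ x ∈ A \ B,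
        (A \ B).card ≤ d → ∃ y ∈ B \ A, insert y (A.erase x) ∈ 𝓑 by
      intro A hA B hB x hx
      exact key (A \ B).card A B hA hB x hx le_rfl
    intro d
    induction d with
    | zero =>
      intro A B hA hB x hx hcard
      have := Finset.card_pos.2 ⟨x, hx⟩
      omega
    | succ d ih =>
      intro A B hA hB x hx hcard
      by_cases hle : (A \ B).card ≤ d
      · exact ih A B hA hB x hx hle
      have hcard' : (A \ B).card = d + 1 := by omega
      by_contra hfail
      push_neg at hfail
      obtain ⟨hxA, hxB⟩ := Finset.mem_sdiff.1 hx
      have hcardAB : A.card = B.card := by rw [hk A hA, hk B hB]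
      have hAB : A ≠ B := fun h => hxB (h ▸ hxA)
      by_cases hd1 : (A \ B).card = 1
      · -- distance-one case: the exchange is `B` itself
        have hABx : A \ B = {x} := by
          rcases Finset.card_eq_one.1 hd1 with ⟨a, ha⟩
          rw [ha] at hx ⊢
          rw [Finset.mem_singleton.1 hx]
        have hBA1 : (B \ A).card = 1 := by rw [← Finset.card_sdiff_comm hcardAB, hd1]
        obtain ⟨y, hy⟩ := Finset.card_eq_one.1 hBA1
        have hyBA : y ∈ B \ A := hy ▸ Finset.mem_singleton_self y
        apply hfail y hyBA
        have hBeq : insert y (A.erase x) = B := by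
          ext p
          simp only [Finset.mem_insert, Finset.mem_erase]
          have h1 : p ∈ A ∧ p ∉ B ↔ p = x := by
            rw [← Finset.mem_sdiff, hABx, Finset.mem_singleton]
          have h2 : p ∈ B ∧ p ∉ A ↔ p = y := by
            rw [← Finset.mem_sdiff, hy, Finset.mem_singleton]
          obtain ⟨hyB, hyA⟩ := Finset.mem_sdiff.1 hyBA
          constructor
          · rintro (rfl | ⟨hpx, hpA⟩)
            · exact hyB
            · by_contra hpB
              exact hpx (h1.1 ⟨hpA, hpB⟩)
          · intro hpB
            by_cases hpA : p ∈ A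
            · exact Or.inr ⟨fun h => hxB (h ▸ hpB), hpA⟩
            · exact Or.inl (h2.1 ⟨hpB, hpA⟩)
        rw [hBeq]
        exact hB
      -- distance at least two
      have hd2 : 2 ≤ (A \ B).card := by omega
      -- every intermediate basis other than A and B contains x
      have hint : ∀ C ∈ 𝓑, A ∩ B ⊆ C → C ⊆ A ∪ B → C ≠ A → C ≠ B → x ∈ C := by
        intro C hC h1 h2 hCA hCB
        by_contra hxC
        have hsub : A \ C ⊆ A \ B := by
          intro a ha
          obtain ⟨haA, haC⟩ := Finset.mem_sdiff.1 ha
          exact Finset.mem_sdiff.2 ⟨haA, fun haB => haC (h1 (Finset.mem_inter.2 ⟨haA, haB⟩))⟩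
        have hne : A \ C ≠ A \ B := by
          intro heq
          apply hCB
          have hACint : A ∩ C = A ∩ B := by
            rw [← Finset.sdiff_sdiff_self_left A C, ← Finset.sdiff_sdiff_self_left A B, heq]
          have hCsub : C \ A ⊆ B \ A := by
            intro c hc
            obtain ⟨hcC, hcA⟩ := Finset.mem_sdiff.1 hc
            exact Finset.mem_sdiff.2 ⟨(Finset.mem_union.1 (h2 hcC)).resolve_left hcA, hcA⟩
          have hcardint : (C ∩ A).card = (B ∩ A).card := by
            rw [Finset.inter_comm C A, Finset.inter_comm B A, hACint]
          have hCB' : C.card = B.card := by rw [hk C hC, hk B hB]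
          have e1 := Finset.card_inter_add_card_sdiff C A
          have e2 := Finset.card_inter_add_card_sdiff B A
          have hcardC : (C \ A).card = (B \ A).card := by omega
          have hCAeq : C \ A = B \ A :=
            Finset.eq_of_subset_of_card_le hCsub (le_of_eq hcardC.symm)
          calc C = C \ A ∪ C ∩ A := (Finset.sdiff_union_inter C A).symm
            _ = B \ A ∪ B ∩ A := by rw [hCAeq, Finset.inter_comm C A, hACint, Finset.inter_comm A B]
            _ = B := Finset.sdiff_union_inter B A
        have hlt : (A \ C).card ≤ d := by
          have := Finset.card_lt_card (Finset.ssubset_iff_subset_ne.2 ⟨hsub, hne⟩)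
          omega
        have hxAC : x ∈ A \ C := Finset.mem_sdiff.2 ⟨hxA, hxC⟩
        obtain ⟨y, hy, hyB⟩ := ih A C hA hC x hxAC hlt
        obtain ⟨hyC, hyA⟩ := Finset.mem_sdiff.1 hy
        have hyBA : y ∈ B \ A := Finset.mem_sdiff.2
          ⟨(Finset.mem_union.1 (h2 hyC)).resolve_left hyA, hyA⟩
        exact hfail y hyBA hyB
      -- the set of intermediate bases other than A and B
      set S₀ : Finset (Finset (Fin n)) :=
        ((𝓑.filter (fun C => A ∩ B ⊆ C ∧ C ⊆ A ∪ B)).erase A).erase B with hS₀def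
      have hS₀mem : ∀ C ∈ S₀, C ∈ 𝓑 ∧ (A ∩ B ⊆ C ∧ C ⊆ A ∪ B) ∧ C ≠ A ∧ C ≠ B := by
        intro C hC
        have h1 := Finset.ne_of_mem_erase hC
        have h2 := Finset.mem_of_mem_erase hC
        have h3 := Finset.ne_of_mem_erase h2
        have h4 := Finset.mem_of_mem_erase h2
        obtain ⟨h5, h6⟩ := Finset.mem_filter.1 h4
        exact ⟨h5, h6, h3, h1⟩
      have hxS₀ : ∀ C ∈ S₀, x ∈ C := fun C hC => by
        obtain ⟨h1, ⟨h2', h3⟩, h4, h5⟩ := hS₀mem C hC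
        exact hint C h1 h2' h3 h4 h5
      have hBAcard : (B \ A).card = d + 1 := by
        rw [← Finset.card_sdiff_comm hcardAB, hcard']
      have hBAne : (B \ A).Nonempty := Finset.card_pos.1 (by omega)
      -- Step 1: separate to get a functional equal on A, B and smaller on S₀
      have hsep : ∃ f : (Fin n → ℝ) →L[ℝ] ℝ, f (ind n A) = f (ind n B) ∧
          ∀ C ∈ S₀, f (ind n C) < f (ind n A) := by
        by_cases hS₀e : S₀ = ∅
        · exact ⟨0, rfl, fun C hC => absurd hC (by rw [hS₀e]; exact Finset.notMem_empty C)⟩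
        obtain ⟨C₀, hC₀⟩ := Finset.nonempty_of_ne_empty hS₀e
        set v : Fin n → ℝ := ind n A - ind n B with hv
        set K : Set (Fin n → ℝ) :=
          convexHull ℝ (ind n '' ↑S₀) + (SetLike.coe (Submodule.span ℝ {v})) with hK
        have hKconv : Convex ℝ K :=
          (convex_convexHull ℝ _).add (Submodule.span ℝ {v}).convex
        have hKclosed : IsClosed K :=
          IsClosed.add_left_of_isCompact (Submodule.closed_of_finiteDimensional _)
            ((Set.toFinite _).isCompact_convexHull ℝ)
        set m : Fin n → ℝ := (2⁻¹ : ℝ) • (ind n A + ind n B) with hm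
        have hmK : m ∉ K := by
          intro hmem'
          obtain ⟨p, hp, q, hq, hpq⟩ := Set.mem_add.1 hmem'
          obtain ⟨t, ht⟩ := Submodule.mem_span_singleton.1 hq
          rw [mem_convexHull_iff_exists_fintype] at hp
          obtain ⟨ι, hι, wt, z, hw0, hw1, hz, hpz⟩ := hp
          have hzC : ∀ i : ι, ∃ C, C ∈ S₀ ∧ ind n C = z i := fun i => by
            obtain ⟨C, hC, hCz⟩ := hz i
            exact ⟨C, hC, hCz⟩
          choose Cz hCz hCzeq using hzC
          have hpcoord : ∀ r : Fin n, p r = ∑ i : ι, wt i * z i r := by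
            intro r
            rw [← hpz]
            simp [Finset.sum_apply]
          have hz01 : ∀ (i : ι) (r : Fin n), z i r = 0 ∨ z i r = 1 := by
            intro i r
            rw [← hCzeq i]
            exact ind_mem_zero_one (Cz i) r
          -- evaluate at x
          have hpx : p x = 1 := by
            rw [hpcoord x]
            calc ∑ i : ι, wt i * z i x = ∑ i : ι, wt i := by
                  apply Finset.sum_congr rfl
                  intro i _
                  rw [← hCzeq i]
                  have hxc : x ∈ Cz i := hxS₀ _ (hCz i)
                  simp [ind, hxc]
              _ = 1 := hw1
          have hvx : v x = 1 := by simp [hv, ind, hxA, hxB]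
          have hmx : m x = 2⁻¹ := by
            simp [hm, ind, hxA, hxB]
          have hqx := congrFun hpq x
          rw [← ht] at hqx
          have hqx' : p x + t * v x = m x := hqx
          have ht2 : t = -2⁻¹ := by
            rw [hpx, hvx, hmx] at hqx'
            linarith
          -- every coordinate in B \ A of p vanishes
          have hpb : ∀ b ∈ B \ A, p b = 0 := by
            intro b hb
            obtain ⟨hbB, hbA⟩ := Finset.mem_sdiff.1 hb
            have hvb : v b = -1 := by simp [hv, ind, hbA, hbB]
            have hmb : m b = 2⁻¹ := by simp [hm, ind, hbA, hbB]
            have hqb := congrFun hpq b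
            rw [← ht] at hqb
            have hqb' : p b + t * v b = m b := hqb
            rw [hvb, hmb, ht2] at hqb'
            linarith
          -- pick an index with positive weight
          have hex0 : ∃ i : ι, wt i ≠ 0 := by
            by_contra hno
            push_neg at hno
            rw [Finset.sum_congr rfl (fun i _ => hno i)] at hw1
            simp at hw1
          obtain ⟨i₀, hi₀⟩ := hex0
          have hzb0 : ∀ b ∈ B \ A, z i₀ b = 0 := by
            intro b hb
            have hsum0 : ∑ i : ι, wt i * z i b = 0 := by rw [← hpcoord b, hpb b hb]
            have hterm := (Finset.sum_eq_zero_iff_of_nonneg (fun i _ => mul_nonneg (hw0 i)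
              (by rcases hz01 i b with h | h <;> rw [h] <;> norm_num))).1 hsum0 i₀
              (Finset.mem_univ i₀)
            rcases mul_eq_zero.1 hterm with h | h
            · exact absurd h hi₀
            · exact h
          -- hence Cz i₀ ⊆ A, so Cz i₀ = A, contradiction
          obtain ⟨hCz𝓑, ⟨hCzl, hCzu⟩, hCzA, hCzB⟩ := hS₀mem _ (hCz i₀)
          apply hCzA
          apply Finset.eq_of_subset_of_card_le
          · intro c hc
            rcases Finset.mem_union.1 (hCzu hc) with h | h
            · exact h
            · by_cases hcA : c ∈ A
              · exact hcA
              · exfalso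
                have := hzb0 c (Finset.mem_sdiff.2 ⟨h, hcA⟩)
                rw [← hCzeq i₀] at this
                simp [ind, hc] at this
          · rw [hk A hA, hk (Cz i₀) hCz𝓑]
        obtain ⟨f, u, hfK, hfm⟩ := geometric_hahn_banach_closed_point hKconv hKclosed hmK
        have hfv : f v = 0 := by
          by_contra hfv0
          have hmemK : ∀ s : ℝ, ind n C₀ + s • v ∈ K := fun s =>
            Set.add_mem_add (subset_convexHull ℝ _ (Set.mem_image_of_mem _ hC₀))
              (Submodule.smul_mem _ s (Submodule.mem_span_singleton_self v))
          have h1 := hfK _ (hmemK ((u - f (ind n C₀)) / f v))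
          rw [map_add, map_smul, smul_eq_mul, div_mul_cancel₀ _ hfv0] at h1
          linarith
        have hfAB : f (ind n A) = f (ind n B) := by
          have h1 : f (ind n A) - f (ind n B) = 0 := by rw [← map_sub]; exact hfv
          linarith
        refine ⟨f, hfAB, fun C hC => ?_⟩
        have hCK : ind n C ∈ K := by
          have h0' : ind n C + (0 : Fin n → ℝ) ∈ K :=
            Set.add_mem_add (subset_convexHull ℝ _ (Set.mem_image_of_mem _ hC))
              (Submodule.zero_mem _)
          simpa using h0'
        have h1 := hfK _ hCK
        have h2 : f m = f (ind n A) := by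
          rw [hm, map_smul, map_add, ← hfAB, smul_eq_mul]
          ring
        rw [h2] at hfm
        linarith
      obtain ⟨f, hfAB, hfS₀⟩ := hsep
      -- Step 2: assemble the full weight vector
      set w₁ : Fin n → ℝ := fun i => f (Pi.single i 1) with hw₁def
      have hfdot : ∀ y : Fin n → ℝ, dotL n w₁ y = f y := dotL_of_clm f
      set M : ℝ := 1 + 𝓑.sup' h0 (fun C => f (ind n C) - f (ind n A)) with hMdef
      have hM1 : 1 ≤ M := by
        have h := Finset.le_sup' (fun C => f (ind n C) - f (ind n A)) hA
        simp only [sub_self] at h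
        linarith
      have hMg : ∀ C ∈ 𝓑, f (ind n C) - f (ind n A) ≤ M - 1 := fun C hC => by
        have h := Finset.le_sup' (fun C => f (ind n C) - f (ind n A)) hC
        linarith
      set w : Fin n → ℝ := fun i => M * wtwo n A B i + w₁ i with hwdef
      have hdotw : ∀ y : Fin n → ℝ,
          dotL n w y = M * dotL n (wtwo n A B) y + dotL n w₁ y := by
        intro y
        simp only [dotL_apply, hwdef, Finset.mul_sum, ← Finset.sum_add_distrib]
        exact Finset.sum_congr rfl fun i _ => by ring
      have hvalA : dotL n w (ind n A) = M * ((A ∩ B).card : ℝ) + f (ind n A) := by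
        rw [hdotw, wtwo_int Finset.inter_subset_left Finset.subset_union_left, hfdot]
      have hvalB : dotL n w (ind n B) = dotL n w (ind n A) := by
        rw [hdotw, wtwo_int Finset.inter_subset_right Finset.subset_union_right, hfdot,
          hvalA, hfAB]
      have hstrict : ∀ C ∈ 𝓑, C ≠ A → C ≠ B →
          dotL n w (ind n C) < dotL n w (ind n A) := by
        intro C hC hCA hCB
        by_cases hCint : A ∩ B ⊆ C ∧ C ⊆ A ∪ B
        · have hCS₀ : C ∈ S₀ := by
            rw [hS₀def]
            exact Finset.mem_erase.2 ⟨hCB, Finset.mem_erase.2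
              ⟨hCA, Finset.mem_filter.2 ⟨hC, hCint⟩⟩⟩
          have h := hfS₀ C hCS₀
          rw [hdotw, wtwo_int hCint.1 hCint.2, hfdot, hvalA]
          linarith
        · have h2 := wtwo_non hCint
          have h3 := hMg C hC
          have hMpos : (0 : ℝ) ≤ M := by linarith
          have h4 : M * dotL n (wtwo n A B) (ind n C) ≤ M * (((A ∩ B).card : ℝ) - 1) :=
            mul_le_mul_of_nonneg_left h2 hMpos
          rw [hdotw, hfdot, hvalA]
          nlinarith
      have hub : ∀ C ∈ 𝓑, dotL n w (ind n C) ≤ dotL n w (ind n A) := by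
        intro C hC
        by_cases h1 : C = A
        · rw [h1]
        by_cases h2 : C = B
        · rw [h2, hvalB]
        exact le_of_lt (hstrict C hC h1 h2)
      have hmemiff : ∀ C ∈ 𝓑, (dotL n w (ind n C) = dotL n w (ind n A) ↔
          C ∈ ({A, B} : Finset (Finset (Fin n)))) := by
        intro C hC
        constructor
        · intro hval
          by_contra hCnot
          simp only [Finset.mem_insert, Finset.mem_singleton] at hCnot
          push_neg at hCnot
          exact absurd hval (ne_of_lt (hstrict C hC hCnot.1 hCnot.2))
        · intro hCmem
          rcases Finset.mem_insert.1 hCmem with rfl | h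
          · rfl
          · rw [Finset.mem_singleton.1 h]
            exact hvalB
      have hABsub : ({A, B} : Finset (Finset (Fin n))) ⊆ 𝓑 := by
        intro C hC
        rcases Finset.mem_insert.1 hC with rfl | h
        · exact hA
        · rw [Finset.mem_singleton.1 h]
          exact hB
      have hFeq := face_eq 𝓑 {A, B} w (dotL n w (ind n A)) hABsub
        ⟨A, Finset.mem_insert_self A {B}⟩ hub hmemiff
      set F := {x ∈ polytopeOf n 𝓑 |
        ∀ y ∈ polytopeOf n 𝓑, ∑ i, w i * y i ≤ ∑ i, w i * x i} with hFdef
      have himg : ind n '' ↑({A, B} : Finset (Finset (Fin n))) = {ind n A, ind n B} := by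
        rw [Finset.coe_insert, Finset.coe_singleton, Set.image_insert_eq, Set.image_singleton]
      have hvne : ind n A - ind n B ≠ 0 := sub_ne_zero.2 (fun h => hAB (ind_inj h))
      have hdir : (affineSpan ℝ F).direction = Submodule.span ℝ {ind n A - ind n B} := by
        rw [hFeq, himg, affineSpan_convexHull, direction_affineSpan, vectorSpan_pair]
        rfl
      have hrank1 : Module.finrank ℝ (affineSpan ℝ F).direction = 1 := by
        rw [hdir]
        exact finrank_span_singleton hvne
      obtain ⟨i, j, hij⟩ := hedge F ⟨w, hFdef⟩ hrank1
      rw [hdir] at hij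
      have hvmem : ind n A - ind n B ∈
          Submodule.span ℝ {(Pi.single i 1 - Pi.single j 1 : Fin n → ℝ)} := by
        rw [← hij]
        exact Submodule.mem_span_singleton_self _
      obtain ⟨t, ht⟩ := Submodule.mem_span_singleton.1 hvmem
      -- second element of A \ B
      have herase : ((A \ B).erase x).Nonempty := by
        rw [← Finset.card_pos, Finset.card_erase_of_mem hx]
        omega
      obtain ⟨a₂, ha₂⟩ := herase
      have ha₂x : a₂ ≠ x := Finset.ne_of_mem_erase ha₂
      obtain ⟨ha₂A, ha₂B⟩ := Finset.mem_sdiff.1 (Finset.mem_of_mem_erase ha₂)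
      have h1 := congrFun ht x
      have h2 := congrFun ht a₂
      simp only [Pi.smul_apply, Pi.sub_apply, Pi.single_apply, smul_eq_mul, ind,
        hxA, hxB, ha₂A, ha₂B, if_true, if_false] at h1 h2
      have hxi_or : x = i ∨ x = j := by
        by_contra hno
        push_neg at hno
        rw [if_neg hno.1, if_neg hno.2] at h1
        norm_num at h1
      have hai_or : a₂ = i ∨ a₂ = j := by
        by_contra hno
        push_neg at hno
        rw [if_neg hno.1, if_neg hno.2] at h2
        norm_num at h2
      have hijne : i ≠ j := by
        rintro rfl
        simp at h1
      rcases hxi_or with hxi | hxj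
      · rcases hai_or with hai | haj
        · exact ha₂x (hai.trans hxi.symm)
        · rw [if_pos hxi, if_neg (fun h => hijne (hxi.symm.trans h))] at h1
          rw [if_neg (fun h => hijne (h.symm.trans haj)), if_pos haj] at h2
          norm_num at h1 h2
          linarith
      · rcases hai_or with hai | haj
        · rw [if_neg (fun h => hijne (h.symm.trans hxj)), if_pos hxj] at h1
          rw [if_pos hai, if_neg (fun h => hijne (hai.symm.trans h))] at h2
          norm_num at h1 h2
          linarith
        · exact ha₂x (haj.trans hxj.symm)
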